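/- In online bipartite matching with a single reusable resource of usage duration d, the function r(S) counting the number of matches of the greedy matching process on arrival set S is monotone: r(B) ≤ r(A) for all B ⊆ A. -/

import Mathlib

/-- The greedy matching process for a single reusable resource with usage duration `d`:
given a list of arrival times in increasing order and the time `free` at which the
resource next becomes available (`none` if it has never been matched), count the
number of matched arrivals. -/
noncomputable def matchCount (d : ℝ) : List ℝ → Option ℝ → ℕ
  | [], _ => 0
  | t :: ts, none => 1 + matchCount d ts (some (t + d))
  | t :: ts, some free =>
      if free ≤ t then 1 + matchCount d ts (some (t + d)) else matchCount d ts free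

/-- `r S`: number of matches of the matching process run on the arrivals in `S`
(processed in arrival-index order, i.e., time order). -/
noncomputable def matchReward {n : ℕ} (a : Fin n → ℝ) (d : ℝ) (S : Finset (Fin n)) : ℕ :=
  matchCount d ((S.sort (· ≤ ·)).map a) none


def optle (f g : Option ℝ) : Prop :=
  match f, g with
  | none, _ => True
  | some x, some y => x ≤ y
  | some _, none => False

lemma matchCount_key (d : ℝ) : ∀ l : List ℝ, l.Pairwise (· ≤ ·) →
    ((∀ f g, optle f g → matchCount d l g ≤ matchCount d l f) ∧
     (∀ (f : Option ℝ) (c : ℝ), (∀ t ∈ l, c ≤ t + d) →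
        matchCount d l f ≤ 1 + matchCount d l (some c))) := by
  intro l
  induction l with
  | nil => intro _; constructor <;> intro f g _ <;> simp [matchCount]
  | cons t ts ih =>
    intro hs
    have hts : ts.Pairwise (· ≤ ·) := hs.of_cons
    have hhead : ∀ s ∈ ts, t ≤ s := fun s hsm => List.rel_of_pairwise_cons hs hsm
    obtain ⟨ihA, ihC⟩ := ih hts
    constructor
    · intro f g hfg
      match f, g with
      | none, none => exact le_refl _
      | none, some y =>
        simp only [matchCount]
        by_cases hy : y ≤ t
        · simp [hy]
        · simp only [hy, if_false]
          calc matchCount d ts (some y) ≤ 1 + matchCount d ts (some (t + d)) :=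
                ihC _ _ (fun s hsm => by linarith [hhead s hsm])
            _ = matchCount d (t :: ts) none := rfl
      | some x, some y =>
        simp only [optle] at hfg
        simp only [matchCount]
        by_cases hy : y ≤ t
        · have hx : x ≤ t := le_trans hfg hy
          simp [hx, hy]
        · by_cases hx : x ≤ t
          · simp only [hx, if_true, hy, if_false]
            calc matchCount d ts (some y) ≤ 1 + matchCount d ts (some (t + d)) :=
                  ihC _ _ (fun s hsm => by linarith [hhead s hsm])
              _ = _ := rfl
          · simp only [hx, hy, if_false]
            exact ihA (some x) (some y) hfg
      | some _, none => exact absurd hfg (by simp [optle])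
    · intro f c hc
      have hct : c ≤ t + d := hc t (List.mem_cons_self)
      have hcts : ∀ s ∈ ts, t + d ≤ s + d := fun s hsm => by linarith [hhead s hsm]
      by_cases hc2 : c ≤ t
      · -- some c matches t
        have hrhs : matchCount d (t :: ts) (some c) = 1 + matchCount d ts (some (t + d)) := by
          simp [matchCount, hc2]
        rw [hrhs]
        match f with
        | none =>
          show 1 + matchCount d ts (some (t+d)) ≤ 1 + (1 + matchCount d ts (some (t+d)))
          omega
        | some x =>
          simp only [matchCount]
          by_cases hx : x ≤ t
          · simp [hx]
          · simp only [hx, if_false]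
            calc matchCount d ts (some x) ≤ 1 + matchCount d ts (some (t + d)) :=
                  ihC _ _ hcts
              _ ≤ 1 + (1 + matchCount d ts (some (t + d))) := by omega
      · -- some c does not match t
        have hrhs : matchCount d (t :: ts) (some c) = matchCount d ts (some c) := by
          simp [matchCount, hc2]
        rw [hrhs]
        have hc' : ∀ s ∈ ts, c ≤ s + d := fun s hsm => hc s (List.mem_cons_of_mem _ hsm)
        match f with
        | none =>
          show 1 + matchCount d ts (some (t + d)) ≤ 1 + matchCount d ts (some c)
          have := ihA (some c) (some (t + d)) hct
          omega
        | some x =>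
          simp only [matchCount]
          by_cases hx : x ≤ t
          · simp only [hx, if_true]
            have := ihA (some c) (some (t + d)) hct
            omega
          · simp only [hx, if_false]
            exact ihC (some x) c hc'

lemma matchCount_sublist (d : ℝ) {l₁ l₂ : List ℝ} (h : List.Sublist l₁ l₂)
    (hs : l₂.Pairwise (· ≤ ·)) :
    ∀ f₁ f₂, optle f₂ f₁ → matchCount d l₁ f₁ ≤ matchCount d l₂ f₂ := by
  induction h with
  | slnil => intro f₁ f₂ _; simp [matchCount]
  | @cons l₁ ts₂ t h ih =>
    intro f₁ f₂ hf
    have hts : ts₂.Pairwise (· ≤ ·) := hs.of_cons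
    have hhead : ∀ s ∈ ts₂, t ≤ s := fun s hsm => List.rel_of_pairwise_cons hs hsm
    have hl₁ : l₁.Pairwise (· ≤ ·) := hts.sublist h
    have hl₁mem : ∀ s ∈ l₁, t + d ≤ s + d := fun s hsm => by
      linarith [hhead s (h.subset hsm)]
    match f₂ with
    | none =>
      show matchCount d l₁ f₁ ≤ 1 + matchCount d ts₂ (some (t + d))
      calc matchCount d l₁ f₁ ≤ 1 + matchCount d l₁ (some (t + d)) :=
            (matchCount_key d l₁ hl₁).2 f₁ (t + d) hl₁mem
        _ ≤ 1 + matchCount d ts₂ (some (t + d)) := by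
            have := ih hts (some (t + d)) (some (t + d)) (le_refl _)
            omega
    | some y =>
      by_cases hy : y ≤ t
      · have : matchCount d (t :: ts₂) (some y) = 1 + matchCount d ts₂ (some (t + d)) := by
          simp [matchCount, hy]
        rw [this]
        calc matchCount d l₁ f₁ ≤ 1 + matchCount d l₁ (some (t + d)) :=
              (matchCount_key d l₁ hl₁).2 f₁ (t + d) hl₁mem
          _ ≤ 1 + matchCount d ts₂ (some (t + d)) := by
              have := ih hts (some (t + d)) (some (t + d)) (le_refl _)
              omega
      · have : matchCount d (t :: ts₂) (some y) = matchCount d ts₂ (some y) := by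
          simp [matchCount, hy]
        rw [this]
        exact ih hts f₁ (some y) hf
  | @cons_cons ts₁ ts₂ t h ih =>
    intro f₁ f₂ hf
    have hts : ts₂.Pairwise (· ≤ ·) := hs.of_cons
    have hhead : ∀ s ∈ ts₂, t ≤ s := fun s hsm => List.rel_of_pairwise_cons hs hsm
    have hts₁ : ts₁.Pairwise (· ≤ ·) := hts.sublist h
    have hts₁mem : ∀ s ∈ ts₁, t + d ≤ s + d := fun s hsm => by
      linarith [hhead s (h.subset hsm)]
    -- whether f₁ matches t
    have ihrec := ih hts
    match f₁, f₂ with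
    | none, none =>
      show 1 + matchCount d ts₁ (some (t+d)) ≤ 1 + matchCount d ts₂ (some (t+d))
      have := ihrec (some (t+d)) (some (t+d)) (le_refl _); omega
    | none, some y =>
      exact absurd hf (by simp [optle])
    | some x, none =>
      show matchCount d (t :: ts₁) (some x) ≤ 1 + matchCount d ts₂ (some (t+d))
      by_cases hx : x ≤ t
      · have : matchCount d (t :: ts₁) (some x) = 1 + matchCount d ts₁ (some (t+d)) := by
          simp [matchCount, hx]
        rw [this]
        have := ihrec (some (t+d)) (some (t+d)) (le_refl _); omega
      · have : matchCount d (t :: ts₁) (some x) = matchCount d ts₁ (some x) := by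
          simp [matchCount, hx]
        rw [this]
        calc matchCount d ts₁ (some x) ≤ 1 + matchCount d ts₁ (some (t + d)) :=
              (matchCount_key d ts₁ hts₁).2 _ _ hts₁mem
          _ ≤ 1 + matchCount d ts₂ (some (t + d)) := by
              have := ihrec (some (t+d)) (some (t+d)) (le_refl _); omega
    | some x, some y =>
      simp only [optle] at hf
      simp only [matchCount]
      by_cases hx : x ≤ t
      · have hy : y ≤ t := le_trans hf hx
        simp only [hx, hy, if_true]
        have := ihrec (some (t+d)) (some (t+d)) (le_refl _); omega
      · by_cases hy : y ≤ t
        · simp only [hx, hy, if_true, if_false]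
          calc matchCount d ts₁ (some x) ≤ 1 + matchCount d ts₁ (some (t + d)) :=
                (matchCount_key d ts₁ hts₁).2 _ _ hts₁mem
            _ ≤ 1 + matchCount d ts₂ (some (t + d)) := by
                have := ihrec (some (t+d)) (some (t+d)) (le_refl _); omega
        · simp only [hx, hy, if_false]
          exact ihrec (some x) (some y) hf


/-- the matching-count function of a single reusable resource is monotone. -/
theorem stmt_4 {n : ℕ} (a : Fin n → ℝ) (ha : StrictMono a) (d : ℝ) (hd : 0 ≤ d)
    (A B : Finset (Fin n)) (hBA : B ⊆ A) :
    matchReward a d B ≤ matchReward a d A := by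
  have hsubperm : List.Subperm (B.sort (· ≤ ·)) (A.sort (· ≤ ·)) :=
    (Finset.sort_nodup B _).subperm (fun x hx => by
      simpa [Finset.mem_sort] using hBA (by simpa [Finset.mem_sort] using hx))
  have hsub : List.Sublist (B.sort (· ≤ ·)) (A.sort (· ≤ ·)) :=
    List.sublist_of_subperm_of_pairwise hsubperm (Finset.pairwise_sort _ _) (Finset.pairwise_sort _ _)
  have hsubmap : List.Sublist ((B.sort (· ≤ ·)).map a) ((A.sort (· ≤ ·)).map a) := hsub.map a
  have hsorted : ((A.sort (· ≤ ·)).map a).Pairwise (· ≤ ·) :=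
    List.Pairwise.map a (fun x y hxy => ha.monotone hxy) (Finset.pairwise_sort _ _)
  exact matchCount_sublist d hsubmap hsorted none none trivial
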